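/- (Theorem 4.3) Fix integers m ≥ 1 and k₁, …, k_m ≥ 1 with k₁ + ⋯ + k_m = n, and fix m mutually distinct complex numbers Λ₁, …, Λ_m. For every δ > 0 there exists ε₀ > 0 such that: whenever λ_{ij} (i = 1, …, m; j = 1, …, kᵢ) are mutually distinct complex numbers with |λ_{ij} − Λᵢ| < ε₀ for all i, j, there exist functions f_{ij} forming a basis of the n-dimensional subspace L = Span({e^{λ_{ij} x}}) of L²([−π, π]) and satisfying ‖f_{ij}(x) − x^{j−1} e^{Λᵢ x}‖_{L²([−π,π])} < δ for all i, j. Consequently, as λ_{ij} → Λᵢ the subspaces L converge, in the sense of convergence of subspaces of a Hilbert space, to the subspace M = Span({x^{j−1} e^{Λᵢ x}} : i = 1, …, m; j = 1, …, kᵢ) spanned by expo-polynomials. -/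

import Mathlib

open MeasureTheory

/-- The L² norm on the interval `[-π, π]`: `‖g‖ = (∫_{-π}^{π} |g(x)|² dx)^{1/2}`. -/
noncomputable def L2norm (g : ℝ → ℂ) : ℝ :=
  Real.sqrt (∫ x in Set.Icc (-Real.pi) Real.pi, ‖g x‖ ^ 2)


open Polynomial Finset


lemma coeff_basis (s : Finset ℂ) (z : ℂ) (hz : z ∈ s) :
    (Lagrange.basis s id z).coeff (s.card - 1) = (∏ w ∈ s.erase z, (z - w))⁻¹ := by
  have h1 : Lagrange.basis s id z
      = C (∏ w ∈ s.erase z, (z - w))⁻¹ * Lagrange.nodal (s.erase z) id := by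
    rw [Lagrange.basis, Lagrange.nodal]
    simp_rw [Lagrange.basisDivisor, id]
    rw [Finset.prod_mul_distrib, ← map_prod C (fun w => (z - w)⁻¹) (s.erase z),
      ← Finset.prod_inv_distrib]
  rw [h1, coeff_C_mul]
  have h2 : s.card - 1 = (Lagrange.nodal (s.erase z) id).natDegree := by
    rw [Lagrange.natDegree_nodal, card_erase_of_mem hz]
  rw [h2, (Lagrange.nodal_monic).coeff_natDegree, mul_one]

noncomputable def Sdd (N : ℕ) (s : Finset ℂ) : ℂ :=
  ∑ z ∈ s, z ^ N * (∏ w ∈ s.erase z, (z - w))⁻¹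

lemma Sdd_low (s : Finset ℂ) (N : ℕ) (hN : N < s.card) :
    Sdd N s = if N = s.card - 1 then 1 else 0 := by
  have hinj : Set.InjOn (id : ℂ → ℂ) s := Function.injective_id.injOn
  have hdeg : ((X : ℂ[X]) ^ N).degree < s.card := by
    rw [degree_X_pow]; exact_mod_cast hN
  have h := Lagrange.eq_interpolate hinj hdeg
  have h2 := congrArg (fun p : ℂ[X] => p.coeff (s.card - 1)) h
  simp only [Lagrange.interpolate_apply, finset_sum_coeff, coeff_C_mul, coeff_X_pow] at h2
  rw [Sdd]
  have h3 : ∀ z ∈ s, eval (id z) ((X:ℂ[X])^N) * (Lagrange.basis s id z).coeff (s.card - 1)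
      = z ^ N * (∏ w ∈ s.erase z, (z - w))⁻¹ := by
    intro z hz
    rw [coeff_basis s z hz]; simp
  rw [Finset.sum_congr rfl h3] at h2
  rw [← h2]
  by_cases hc : N = s.card - 1
  · simp [hc]
  · have : ¬ (s.card - 1 = N) := fun h => hc h.symm
    simp [hc, this]

lemma Sdd_insert (a : ℂ) (s : Finset ℂ) (ha : a ∉ s) (N : ℕ) :
    Sdd N (insert a s) =
      (∑ e ∈ Finset.range N, a ^ e * Sdd (N - 1 - e) s) + a ^ N * Sdd 0 (insert a s) := by
  have herase : (insert a s).erase a = s := Finset.erase_insert ha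
  have hQ : ∀ c ∈ s, (insert a s).erase c = insert a (s.erase c) := fun c hc =>
    Finset.erase_insert_of_ne (ne_of_mem_of_not_mem hc ha).symm
  have hae : ∀ c ∈ s, a ∉ s.erase c := fun c hc h => ha (Finset.mem_of_mem_erase h)
  have key : ∀ c ∈ s, ∏ w ∈ (insert a s).erase c, (c - w)
      = (c - a) * ∏ w ∈ s.erase c, (c - w) := by
    intro c hc
    rw [hQ c hc, Finset.prod_insert (hae c hc)]
  have hca : ∀ c ∈ s, c - a ≠ 0 := fun c hc =>
    sub_ne_zero.mpr (ne_of_mem_of_not_mem hc ha)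
  have hP : ∀ c ∈ s, (∏ w ∈ s.erase c, (c - w)) ≠ 0 := by
    intro c hc
    rw [Finset.prod_ne_zero_iff]
    intro w hw
    exact sub_ne_zero.mpr ((Finset.mem_erase.mp hw).1.symm)
  have main : ∑ c ∈ s, c ^ N * (∏ w ∈ (insert a s).erase c, (c - w))⁻¹
      = (∑ e ∈ Finset.range N, a ^ e * Sdd (N - 1 - e) s)
        + a ^ N * ∑ c ∈ s, c ^ 0 * (∏ w ∈ (insert a s).erase c, (c - w))⁻¹ := by
    simp only [Sdd, Finset.mul_sum]
    rw [Finset.sum_comm, ← Finset.sum_add_distrib]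
    refine Finset.sum_congr rfl fun c hc => ?_
    rw [key c hc, mul_inv]
    have geo : (∑ e ∈ Finset.range N, a ^ e * c ^ (N - 1 - e)) * (c - a) = c ^ N - a ^ N := by
      have h := geom_sum₂_mul (R := ℂ) a c N
      linear_combination -h
    have hinv : (c - a) * (c - a)⁻¹ = 1 := mul_inv_cancel₀ (hca c hc)
    simp_rw [← mul_assoc, ← Finset.sum_mul]
    linear_combination (-((c - a)⁻¹ * (∏ w ∈ s.erase c, (c - w))⁻¹)) * geo
      + ((∑ e ∈ Finset.range N, a ^ e * c ^ (N - 1 - e)) * (∏ w ∈ s.erase c, (c - w))⁻¹) * hinv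
  have expandN : ∀ M : ℕ, Sdd M (insert a s) = a ^ M * (∏ w ∈ s, (a - w))⁻¹
      + ∑ c ∈ s, c ^ M * (∏ w ∈ (insert a s).erase c, (c - w))⁻¹ := by
    intro M
    rw [Sdd, Finset.sum_insert ha, herase]
  rw [expandN N, expandN 0]
  linear_combination main

lemma Sdd_empty (N : ℕ) : Sdd N (∅ : Finset ℂ) = 0 := by simp [Sdd]

lemma Sdd_bound (ε : ℝ) (hε : 0 ≤ ε) (s : Finset ℂ) (hz : ∀ z ∈ s, ‖z‖ ≤ ε)
    (N : ℕ) (hN : s.card ≤ N) :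
    ‖Sdd N s‖ ≤ (N + 1 : ℝ) ^ s.card * ε ^ (N + 1 - s.card) := by
  induction s using Finset.induction_on generalizing N with
  | empty =>
      rw [Sdd_empty]
      simp only [norm_zero, card_empty, pow_zero, one_mul]
      positivity
  | @insert a s ha ih =>
      have haε : ‖a‖ ≤ ε := hz a (mem_insert_self a s)
      have hzs : ∀ z ∈ s, ‖z‖ ≤ ε := fun z h => hz z (mem_insert_of_mem h)
      rw [card_insert_of_notMem ha] at hN ⊢
      rcases s.eq_empty_or_nonempty with rfl | hs
      · -- singleton
        rw [Sdd_insert a ∅ ha N]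
        have h0 : Sdd 0 (insert a (∅:Finset ℂ)) = 1 := by
          rw [Sdd_low]
          · simp
          · simp
        have hzero : ∀ e ∈ Finset.range N, a ^ e * Sdd (N - 1 - e) (∅:Finset ℂ) = 0 := by
          intro e he; rw [Sdd_empty, mul_zero]
        rw [Finset.sum_congr rfl hzero, Finset.sum_const_zero, zero_add, h0, mul_one]
        calc ‖a ^ N‖ = ‖a‖ ^ N := norm_pow _ _
          _ ≤ ε ^ N := pow_le_pow_left₀ (norm_nonneg a) haε N
          _ ≤ (N + 1 : ℝ) ^ (0 + 1) * ε ^ (N + 1 - (0 + 1)) := by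
              simp only [card_empty, zero_add, pow_one, Nat.add_sub_cancel]
              nlinarith [pow_nonneg hε N]
      · -- main step
        have hcard2 : 2 ≤ (insert a s).card := by
          rw [card_insert_of_notMem ha]
          have := hs.card_pos; omega
        have h0 : Sdd 0 (insert a s) = 0 := by
          rw [Sdd_low _ _ (by omega)]
          have : ¬ (0 = (insert a s).card - 1) := by omega
          simp [this]
        rw [Sdd_insert a s ha N, h0, mul_zero, add_zero]
        have r := s.card
        -- termwise bound
        have hterm : ∀ e ∈ Finset.range N,
            ‖a ^ e * Sdd (N - 1 - e) s‖
              ≤ (N + 1 : ℝ) ^ s.card * ε ^ (N + 1 - (s.card + 1)) := by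
          intro e he
          rw [Finset.mem_range] at he
          rw [norm_mul, norm_pow]
          set M := N - 1 - e with hM
          have hcardpos := hs.card_pos
          rcases lt_trichotomy M (s.card - 1) with hlt | heq | hgt
          · rw [Sdd_low s M (by omega), if_neg (by omega), norm_zero, mul_zero]
            positivity
          · rw [Sdd_low s M (by omega), if_pos heq, norm_one, mul_one]
            have h1 : ‖a‖ ^ e ≤ ε ^ e :=
              pow_le_pow_left₀ (norm_nonneg a) haε e
            have he' : e = N + 1 - (s.card + 1) := by
              have := hs.card_pos; omega
            calc ‖a‖ ^ e ≤ ε ^ e := h1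
              _ = ε ^ (N + 1 - (s.card + 1)) := by rw [he']
              _ ≤ (N + 1 : ℝ) ^ s.card * ε ^ (N + 1 - (s.card + 1)) := by
                  have h2 : (1:ℝ) ≤ ((N:ℝ) + 1) ^ s.card :=
                    one_le_pow₀ (by linarith [Nat.cast_nonneg (α:=ℝ) N])
                  nlinarith [pow_nonneg hε (N + 1 - (s.card + 1))]
          · have hMs : s.card ≤ M := by have := hs.card_pos; omega
            have hb := ih hzs M hMs
            have h1 : ‖a‖ ^ e ≤ ε ^ e :=
              pow_le_pow_left₀ (norm_nonneg a) haε e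
            have hmono : ((M:ℝ) + 1) ^ s.card ≤ ((N:ℝ) + 1) ^ s.card := by
              apply pow_le_pow_left₀ (by positivity)
              have h3 : M ≤ N := by omega
              have h4 : (M:ℝ) ≤ (N:ℝ) := by exact_mod_cast h3
              linarith
            have hexp : e + (M + 1 - s.card) = N + 1 - (s.card + 1) := by omega
            calc ‖a‖ ^ e * ‖Sdd M s‖
                ≤ ε ^ e * ((M + 1 : ℝ) ^ s.card * ε ^ (M + 1 - s.card)) := by
                  apply mul_le_mul h1 hb (norm_nonneg _) (by positivity)
              _ ≤ ε ^ e * ((N + 1 : ℝ) ^ s.card * ε ^ (M + 1 - s.card)) := by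
                  apply mul_le_mul_of_nonneg_left _ (by positivity)
                  apply mul_le_mul_of_nonneg_right hmono (by positivity)
              _ = (N + 1 : ℝ) ^ s.card * ε ^ (N + 1 - (s.card + 1)) := by
                  rw [← hexp, pow_add]; ring
        calc ‖∑ e ∈ Finset.range N, a ^ e * Sdd (N - 1 - e) s‖
            ≤ ∑ e ∈ Finset.range N, ‖a ^ e * Sdd (N - 1 - e) s‖ :=
              norm_sum_le _ _
          _ ≤ ∑ e ∈ Finset.range N, (N + 1 : ℝ) ^ s.card * ε ^ (N + 1 - (s.card + 1)) :=
              Finset.sum_le_sum hterm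
          _ = N * ((N + 1 : ℝ) ^ s.card * ε ^ (N + 1 - (s.card + 1))) := by
              rw [Finset.sum_const, Finset.card_range]; ring
          _ ≤ (N + 1 : ℝ) ^ (s.card + 1) * ε ^ (N + 1 - (s.card + 1)) := by
              rw [pow_succ]
              nlinarith [pow_nonneg hε (N + 1 - (s.card + 1)),
                pow_nonneg (by positivity : (0:ℝ) ≤ (N:ℝ)+1) s.card,
                pow_nonneg hε (N + 1 - (s.card + 1))]


noncomputable def ddsum (s : Finset ℂ) (x : ℝ) : ℂ :=
  ∑ z ∈ s, Complex.exp (z * x) * (∏ w ∈ s.erase z, (z - w))⁻¹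

lemma exp_comb_close0 (n : ℕ) (s : Finset ℂ) (hs : s.Nonempty) (hsn : s.card ≤ n)
    (ε : ℝ) (hε0 : 0 ≤ ε) (hε1 : ε ≤ 1) (hz : ∀ z ∈ s, ‖z‖ ≤ ε)
    (x : ℝ) (hx : |x| ≤ Real.pi) :
    ‖(∑ z ∈ s, Complex.exp (z * x) * (∏ w ∈ s.erase z, (z - w))⁻¹)
      - (x:ℂ) ^ (s.card - 1) / (Nat.factorial (s.card - 1))‖
      ≤ ε * ∑' (N : ℕ), ((2:ℝ) ^ n * Real.pi) ^ N / (Nat.factorial N) := by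
  have hc1 : 1 ≤ s.card := hs.card_pos
  set c := s.card with hc
  -- the coefficient function
  set f : ℕ → ℂ := fun N => (x:ℂ) ^ N / (N.factorial:ℂ) * Sdd N s with hf
  have hsummand : ∀ z : ℂ, Summable (fun N : ℕ => (z * x) ^ N / (N.factorial : ℂ)
      * (∏ w ∈ s.erase z, (z - w))⁻¹) := by
    intro z
    exact (NormedSpace.expSeries_div_summable (z * x)).mul_right _
  have hG : (∑ z ∈ s, Complex.exp (z * x) * (∏ w ∈ s.erase z, (z - w))⁻¹)
      = ∑' (N : ℕ), f N := by
    have h1 : ∀ z ∈ s, Complex.exp (z * x) * (∏ w ∈ s.erase z, (z - w))⁻¹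
        = ∑' (N : ℕ), (z * x) ^ N / (N.factorial : ℂ) * (∏ w ∈ s.erase z, (z - w))⁻¹ := by
      intro z _
      rw [Complex.exp_eq_exp_ℂ, NormedSpace.exp_eq_tsum_div, tsum_mul_right]
    rw [Finset.sum_congr rfl h1]
    rw [← Summable.tsum_finsetSum (f := fun (z : ℂ) (N : ℕ) => (z * x) ^ N / (N.factorial:ℂ)
      * (∏ w ∈ s.erase z, (z - w))⁻¹) (fun z _ => hsummand z)]
    apply tsum_congr
    intro N
    rw [hf]
    simp only [Sdd, Finset.mul_sum]
    refine Finset.sum_congr rfl fun z hzs => ?_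
    rw [mul_pow]
    ring
  have hsumf : Summable f := by
    have := summable_sum (fun z (_ : z ∈ s) => hsummand z)
    apply this.congr
    intro N
    rw [hf]
    simp only [Sdd, Finset.mul_sum]
    refine Finset.sum_congr rfl fun z hzs => ?_
    rw [mul_pow]; ring
  have hsplit := hsumf.sum_add_tsum_nat_add c
  have hinit : ∑ i ∈ Finset.range c, f i = (x:ℂ) ^ (c - 1) / (Nat.factorial (c - 1)) := by
    rw [Finset.sum_eq_single_of_mem (c - 1) (Finset.mem_range.mpr (by omega))]
    · rw [hf]
      simp only
      rw [Sdd_low s (c-1) (by omega), if_pos rfl, mul_one]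
    · intro i hi hne
      rw [hf]
      simp only
      rw [Sdd_low s i (Finset.mem_range.mp hi), if_neg (by omega), mul_zero]
  -- bound h
  set h : ℕ → ℝ := fun N => ε * (((2:ℝ) ^ n * Real.pi) ^ N / (Nat.factorial N)) with hh
  have hpi : (0:ℝ) ≤ Real.pi := Real.pi_nonneg
  have hbound : ∀ i : ℕ, ‖f (i + c)‖ ≤ h (i + c) := by
    intro i
    set N := i + c with hN
    have hNc : c ≤ N := by omega
    rw [hf, hh]
    simp only
    rw [norm_mul, norm_div]
    have h1 : ‖(x:ℂ) ^ N‖ ≤ Real.pi ^ N := by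
      rw [norm_pow, Complex.norm_real, Real.norm_eq_abs]
      exact pow_le_pow_left₀ (abs_nonneg x) hx N
    have h2 : ‖Sdd N s‖ ≤ (N + 1 : ℝ) ^ c * ε ^ (N + 1 - c) :=
      Sdd_bound ε hε0 s hz N hNc
    have h3 : ((N:ℝ) + 1) ^ c * ε ^ (N + 1 - c) ≤ ((2:ℝ) ^ n) ^ N * ε := by
      have e1 : ((N:ℝ) + 1) ^ c ≤ ((N:ℝ) + 1) ^ n :=
        pow_le_pow_right₀ (by linarith [Nat.cast_nonneg (α := ℝ) N]) hsn
      have e2 : ((N:ℝ) + 1) ^ n ≤ ((2:ℝ) ^ n) ^ N := by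
        have : ((N:ℝ) + 1) ≤ (2:ℝ) ^ N := by
          exact_mod_cast Nat.lt_two_pow_self (n := N)
        calc ((N:ℝ) + 1) ^ n ≤ ((2:ℝ) ^ N) ^ n :=
              pow_le_pow_left₀ (by linarith [Nat.cast_nonneg (α := ℝ) N]) this n
          _ = ((2:ℝ) ^ n) ^ N := by rw [← pow_mul, ← pow_mul, Nat.mul_comm]
      have e3 : ε ^ (N + 1 - c) ≤ ε := by
        have : N + 1 - c = (N - c) + 1 := by omega
        rw [this, pow_succ]
        nlinarith [(pow_le_one₀ hε0 hε1 : ε ^ (N - c) ≤ 1), pow_nonneg hε0 (N - c)]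
      calc ((N:ℝ) + 1) ^ c * ε ^ (N + 1 - c) ≤ ((2:ℝ) ^ n) ^ N * ε ^ (N + 1 - c) := by
            apply mul_le_mul_of_nonneg_right (e1.trans e2) (pow_nonneg hε0 _)
        _ ≤ ((2:ℝ) ^ n) ^ N * ε := mul_le_mul_of_nonneg_left e3 (by positivity)
    have h4 : ‖(N.factorial : ℂ)‖ = (N.factorial : ℝ) := Complex.norm_natCast _
    rw [h4]
    have hfac : (0:ℝ) < (N.factorial : ℝ) := by exact_mod_cast N.factorial_pos
    calc ‖(x:ℂ) ^ N‖ / (N.factorial : ℝ) * ‖Sdd N s‖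
        ≤ Real.pi ^ N / (N.factorial : ℝ) * (((N:ℝ) + 1) ^ c * ε ^ (N + 1 - c)) := by
          gcongr
      _ ≤ Real.pi ^ N / (N.factorial : ℝ) * (((2:ℝ) ^ n) ^ N * ε) := by
          apply mul_le_mul_of_nonneg_left h3 (by positivity)
      _ = ε * (((2:ℝ) ^ n * Real.pi) ^ N / (Nat.factorial N)) := by
          rw [mul_pow]; ring
  have hsumh : Summable h := (Real.summable_pow_div_factorial _).mul_left ε
  have hsumh' : Summable (fun i => h (i + c)) := (summable_nat_add_iff c).2 hsumh
  have hnormsum : Summable (fun i => ‖f (i + c)‖) :=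
    Summable.of_nonneg_of_le (fun _ => norm_nonneg _) hbound hsumh'
  have step1 : (∑ z ∈ s, Complex.exp (z * x) * (∏ w ∈ s.erase z, (z - w))⁻¹)
      - (x:ℂ) ^ (c - 1) / (Nat.factorial (c - 1)) = ∑' (i : ℕ), f (i + c) := by
    rw [hG, ← hsplit, hinit, add_sub_cancel_left]
  rw [step1]
  calc ‖∑' (i : ℕ), f (i + c)‖ ≤ ∑' (i : ℕ), ‖f (i + c)‖ := norm_tsum_le_tsum_norm hnormsum
    _ ≤ ∑' (i : ℕ), h (i + c) := Summable.tsum_le_tsum hbound hnormsum hsumh'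
    _ ≤ ∑' (N : ℕ), h N := by
        rw [← hsumh.sum_add_tsum_nat_add c]
        have : 0 ≤ ∑ i ∈ Finset.range c, h i := by
          apply Finset.sum_nonneg
          intro i _
          rw [hh]
          positivity
        linarith
    _ = ε * ∑' (N : ℕ), ((2:ℝ) ^ n * Real.pi) ^ N / (Nat.factorial N) := by
        rw [hh, tsum_mul_left]

lemma exp_comb_close (n : ℕ) (s : Finset ℂ) (hs : s.Nonempty) (hsn : s.card ≤ n)
    (ε : ℝ) (hε0 : 0 ≤ ε) (hε1 : ε ≤ 1) (hz : ∀ z ∈ s, ‖z‖ ≤ ε)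
    (x : ℝ) (hx : |x| ≤ Real.pi) :
    ‖ddsum s x - (x:ℂ) ^ (s.card - 1) / (Nat.factorial (s.card - 1))‖
      ≤ ε * ∑' (N : ℕ), ((2:ℝ) ^ n * Real.pi) ^ N / (Nat.factorial N) := by
  unfold ddsum
  exact exp_comb_close0 n s hs hsn ε hε0 hε1 hz x hx

noncomputable def expHom (a : ℂ) : Multiplicative ℝ →* ℂ where
  toFun x := Complex.exp (a * (Multiplicative.toAdd x))
  map_one' := by simp
  map_mul' x y := by
    simp only [toAdd_mul]
    push_cast
    rw [mul_add, Complex.exp_add]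

lemma expHom_inj : Function.Injective expHom := by
  intro a b hab
  have h1 : ∀ x : ℝ, Complex.exp (a * x) = Complex.exp (b * x) := by
    intro x
    exact congrFun (congrArg (fun f => f.toFun) hab) (Multiplicative.ofAdd x)
  obtain ⟨n, hn⟩ := Complex.exp_eq_exp_iff_exists_int.mp (h1 1)
  rw [Complex.ofReal_one, mul_one, mul_one] at hn
  have hpi : (2 * (Real.pi:ℂ) * Complex.I) ≠ 0 := by
    simp [Real.pi_ne_zero, Complex.I_ne_zero, Complex.ofReal_ne_zero]
  have key : ∀ q : ℕ, 0 < q → ∃ m : ℤ, n = (q : ℤ) * m := by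
    intro q hq
    obtain ⟨m, hm⟩ := Complex.exp_eq_exp_iff_exists_int.mp (h1 ((q : ℝ))⁻¹)
    refine ⟨m, ?_⟩
    have hq0 : ((q:ℝ):ℂ) ≠ 0 := by
      rw [Complex.ofReal_ne_zero]
      exact_mod_cast hq.ne'
    have h2 : a = b + (q : ℂ) * m * (2 * Real.pi * Complex.I) := by
      rw [Complex.ofReal_inv, Complex.ofReal_natCast] at hm
      have hinv : (q:ℂ) * ((q:ℂ))⁻¹ = 1 := mul_inv_cancel₀ (by exact_mod_cast hq.ne')
      linear_combination (q:ℂ) * hm + (b - a) * hinv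
    rw [hn] at h2
    have h3 : (n : ℂ) * (2 * Real.pi * Complex.I)
        = (q : ℂ) * m * (2 * Real.pi * Complex.I) := by linear_combination h2
    have h4 : (n : ℂ) = (q : ℂ) * m := mul_right_cancel₀ hpi h3
    exact_mod_cast h4
  obtain ⟨m, hm⟩ := key (n.natAbs + 1) (Nat.succ_pos _)
  have hA : n.natAbs = (n.natAbs + 1) * m.natAbs := by
    have := congrArg Int.natAbs hm
    rwa [Int.natAbs_mul, Int.natAbs_natCast] at this
  have hn0 : n = 0 := by
    rcases Nat.eq_zero_or_pos m.natAbs with h0 | hpos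
    · rw [h0, mul_zero] at hA
      exact Int.natAbs_eq_zero.mp hA
    · exfalso
      have h5 : n.natAbs + 1 ≤ (n.natAbs + 1) * m.natAbs :=
        Nat.le_mul_of_pos_right _ hpos
      omega
  rw [hn0] at hn
  simpa using hn

lemma exp_linearIndependent {ι : Type*} (lam : ι → ℂ) (hinj : Function.Injective lam) :
    LinearIndependent ℂ (fun (q : ι) => (fun x : ℝ => Complex.exp (lam q * x))) := by
  have h := (linearIndependent_monoidHom (Multiplicative ℝ) ℂ).comp
    (fun q => expHom (lam q)) (fun q q' h => hinj (expHom_inj h))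
  exact h

section main
variable {m : ℕ} {k : Fin m → ℕ}

noncomputable def spts (lam : (Σ i : Fin m, Fin (k i)) → ℂ) (Λ : Fin m → ℂ)
    (p : Σ i : Fin m, Fin (k i)) : Finset ℂ :=
  (Finset.Iic p.2).image (fun l => lam ⟨p.1, l⟩ - Λ p.1)

noncomputable def fdd (lam : (Σ i : Fin m, Fin (k i)) → ℂ) (Λ : Fin m → ℂ)
    (p : Σ i : Fin m, Fin (k i)) : ℝ → ℂ :=
  fun x => Complex.exp (Λ p.1 * x) *
    ((Nat.factorial (p.2 : ℕ) : ℂ) * ddsum (spts lam Λ p) x)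

noncomputable def coefdd (lam : (Σ i : Fin m, Fin (k i)) → ℂ) (Λ : Fin m → ℂ)
    (p : Σ i : Fin m, Fin (k i)) (l : Fin (k p.1)) : ℂ :=
  (Nat.factorial (p.2 : ℕ) : ℂ) *
    (∏ w ∈ (spts lam Λ p).erase (lam ⟨p.1, l⟩ - Λ p.1), ((lam ⟨p.1, l⟩ - Λ p.1) - w))⁻¹

variable {lam : (Σ i : Fin m, Fin (k i)) → ℂ} {Λ : Fin m → ℂ}

lemma nu_injective (hinj : Function.Injective lam) (i : Fin m) :
    Function.Injective (fun l : Fin (k i) => lam ⟨i, l⟩ - Λ i) := by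
  intro l l' h
  have h2 : lam ⟨i, l⟩ = lam ⟨i, l'⟩ := by
    have h' : lam ⟨i, l⟩ - Λ i = lam ⟨i, l'⟩ - Λ i := h
    exact sub_left_injective h'
  have := hinj h2
  exact sigma_mk_injective (β := fun i => Fin (k i)) this

lemma spts_card (hinj : Function.Injective lam) (p : Σ i : Fin m, Fin (k i)) :
    (spts lam Λ p).card = (p.2 : ℕ) + 1 := by
  rw [spts, Finset.card_image_of_injective _ (nu_injective hinj p.1), Fin.card_Iic]

lemma spts_mem (p : Σ i : Fin m, Fin (k i)) {l : Fin (k p.1)} (hl : l ≤ p.2) :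
    lam ⟨p.1, l⟩ - Λ p.1 ∈ spts lam Λ p :=
  Finset.mem_image_of_mem _ (Finset.mem_Iic.mpr hl)

lemma fdd_comb (hinj : Function.Injective lam) (p : Σ i : Fin m, Fin (k i)) :
    fdd lam Λ p = ∑ l ∈ Finset.Iic p.2, coefdd lam Λ p l •
      (fun x : ℝ => Complex.exp (lam ⟨p.1, l⟩ * x)) := by
  funext x
  rw [fdd, ddsum, spts, Finset.sum_image (fun a _ b _ h => nu_injective hinj p.1 h)]
  simp only [Finset.sum_apply, Pi.smul_apply, smul_eq_mul, Finset.mul_sum]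
  refine Finset.sum_congr rfl fun l hl => ?_
  rw [coefdd]
  have hexp : Complex.exp (Λ p.1 * x) * Complex.exp ((lam ⟨p.1, l⟩ - Λ p.1) * x)
      = Complex.exp (lam ⟨p.1, l⟩ * x) := by
    rw [← Complex.exp_add]; congr 1; ring
  rw [spts]
  linear_combination ((Nat.factorial (p.2 : ℕ) : ℂ) *
    (∏ w ∈ ((Finset.Iic p.2).image (fun l => lam ⟨p.1, l⟩ - Λ p.1)).erase
      (lam ⟨p.1, l⟩ - Λ p.1), ((lam ⟨p.1, l⟩ - Λ p.1) - w))⁻¹) * hexp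

lemma coefdd_ne (p : Σ i : Fin m, Fin (k i)) (l : Fin (k p.1)) :
    coefdd lam Λ p l ≠ 0 := by
  rw [coefdd]
  apply mul_ne_zero
  · exact_mod_cast (Nat.factorial_ne_zero _)
  · apply inv_ne_zero
    rw [Finset.prod_ne_zero_iff]
    intro w hw
    exact sub_ne_zero.mpr ((Finset.mem_erase.mp hw).1.symm)

lemma fdd_close (hinj : Function.Injective lam) (n : ℕ)
    (p : Σ i : Fin m, Fin (k i)) (hn : (p.2 : ℕ) + 1 ≤ n)
    (ε : ℝ) (hε0 : 0 ≤ ε) (hε1 : ε ≤ 1)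
    (hclose : ∀ l : Fin (k p.1), ‖lam ⟨p.1, l⟩ - Λ p.1‖ ≤ ε)
    (x : ℝ) (hx : |x| ≤ Real.pi) :
    ‖fdd lam Λ p x - (x:ℂ) ^ (p.2 : ℕ) * Complex.exp (Λ p.1 * x)‖
      ≤ Real.exp (‖Λ p.1‖ * Real.pi) * (Nat.factorial n) *
        (ε * ∑' (N : ℕ), ((2:ℝ) ^ n * Real.pi) ^ N / (Nat.factorial N)) := by
  have hcard := spts_card (Λ := Λ) hinj p
  set J := (p.2 : ℕ) with hJ
  have hJfac : ((Nat.factorial J : ℂ)) ≠ 0 := by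
    exact_mod_cast Nat.factorial_ne_zero J
  have hdiff : fdd lam Λ p x - (x:ℂ) ^ J * Complex.exp (Λ p.1 * x)
      = Complex.exp (Λ p.1 * x) *
        ((Nat.factorial J : ℂ) * (ddsum (spts lam Λ p) x - (x:ℂ) ^ J / (Nat.factorial J))) := by
    rw [fdd]
    have h5 : (Nat.factorial J : ℂ) * ((x:ℂ) ^ J / (Nat.factorial J)) = (x:ℂ) ^ J :=
      mul_div_cancel₀ _ hJfac
    linear_combination Complex.exp (Λ p.1 * (x:ℂ)) * h5
  rw [hdiff, norm_mul, norm_mul]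
  have b1 : ‖Complex.exp (Λ p.1 * x)‖ ≤ Real.exp (‖Λ p.1‖ * Real.pi) := by
    rw [Complex.norm_exp]
    apply Real.exp_le_exp.mpr
    have : (Λ p.1 * (x:ℂ)).re = (Λ p.1).re * x := by
      simp [Complex.mul_re]
    rw [this]
    calc (Λ p.1).re * x ≤ |(Λ p.1).re * x| := le_abs_self _
      _ = |(Λ p.1).re| * |x| := abs_mul _ _
      _ ≤ ‖Λ p.1‖ * Real.pi := by
          apply mul_le_mul (Complex.abs_re_le_norm _) hx (abs_nonneg x) (norm_nonneg _)
  have b2 : ‖(Nat.factorial J : ℂ)‖ ≤ (Nat.factorial n : ℝ) := by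
    rw [Complex.norm_natCast]
    exact_mod_cast Nat.factorial_le (by omega)
  have b3 : ‖ddsum (spts lam Λ p) x - (x:ℂ) ^ J / (Nat.factorial J)‖
      ≤ ε * ∑' (N : ℕ), ((2:ℝ) ^ n * Real.pi) ^ N / (Nat.factorial N) := by
    have hne : (spts lam Λ p).Nonempty := by
      rw [← Finset.card_pos, hcard]; omega
    have h := exp_comb_close n (spts lam Λ p) hne (by omega : (spts lam Λ p).card ≤ n)
      ε hε0 hε1 ?_ x hx
    · rw [hcard] at h
      simpa using h
    · intro z hz
      rw [spts] at hz
      obtain ⟨l, hl, rfl⟩ := Finset.mem_image.mp hz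
      exact hclose l
  rw [mul_assoc]
  exact mul_le_mul b1 (mul_le_mul b2 b3 (norm_nonneg _) (by positivity))
    (mul_nonneg (norm_nonneg _) (norm_nonneg _)) (Real.exp_nonneg _)

end main

/-- Theorem 4.3: fix cluster limits `Λ₁, …, Λ_m` (mutually distinct) and
multiplicities `k₁, …, k_m ≥ 1` with `k₁ + ⋯ + k_m = n`. For every `δ > 0` there
is `ε₀ > 0` such that whenever the `λ_{ij}` are mutually distinct with
`|λ_{ij} − Λᵢ| < ε₀`, the subspace `L = Span({e^{λ_{ij} x}})` has a basis
`f_{ij}` (linearly independent and spanning `L`) with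
`‖f_{ij}(x) − x^{j−1} e^{Λᵢ x}‖_{L²([-π,π])} < δ` for all `i, j`; consequently, as
`λ_{ij} → Λᵢ`, `L` converges to the span `M` of the expo-polynomials
`x^{j−1} e^{Λᵢ x}` in the sense of convergence of subspaces of a Hilbert space. -/
theorem stmt16 (m : ℕ) (hm : 1 ≤ m) (k : Fin m → ℕ) (hk : ∀ i, 1 ≤ k i)
    (n : ℕ) (hkn : ∑ i, k i = n)
    (Λ : Fin m → ℂ) (hΛ : Function.Injective Λ) :
    ∀ δ > (0 : ℝ), ∃ ε₀ > (0 : ℝ),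
      ∀ lam : (Σ i : Fin m, Fin (k i)) → ℂ, Function.Injective lam →
      (∀ p : Σ i : Fin m, Fin (k i), ‖lam p - Λ p.1‖ < ε₀) →
      ∃ f : (Σ i : Fin m, Fin (k i)) → (ℝ → ℂ),
        LinearIndependent ℂ f ∧
        Submodule.span ℂ (Set.range f) =
          Submodule.span ℂ
            (Set.range fun p : Σ i : Fin m, Fin (k i) =>
              fun x : ℝ => Complex.exp (lam p * x)) ∧
        ∀ p : Σ i : Fin m, Fin (k i),
          L2norm (fun x : ℝ =>
            f p x - (x : ℂ) ^ (p.2 : ℕ) * Complex.exp (Λ p.1 * x)) < δ := by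
  intro δ hδ
  set Etot : ℝ := ∑' (N : ℕ), ((2:ℝ)^n * Real.pi)^N / (Nat.factorial N) with hEtotdef
  set R : ℝ := ∑ i, ‖Λ i‖ with hRdef
  set K0 : ℝ := Real.exp (R * Real.pi) * (Nat.factorial n) * Etot with hK0def
  have hEtot0 : 0 ≤ Etot := tsum_nonneg (fun N => by positivity)
  have hK00 : 0 ≤ K0 := by positivity
  set K1 : ℝ := (K0 + 1) * (2*Real.pi + 1) with hK1def
  have hpi := Real.pi_pos
  have hK10 : 0 < K1 := by nlinarith
  set ε₀ : ℝ := min 1 (δ / K1) with hε₀def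
  have hε₀1 : ε₀ ≤ 1 := min_le_left _ _
  have hε₀δ : ε₀ ≤ δ / K1 := min_le_right _ _
  have hε₀pos : 0 < ε₀ := lt_min one_pos (div_pos hδ hK10)
  refine ⟨ε₀, hε₀pos, ?_⟩
  intro lam hinj hclose
  have hcomb := fun p => fdd_comb (Λ := Λ) hinj p
  have hkin : ∀ i : Fin m, k i ≤ n := by
    intro i
    rw [← hkn]
    exact Finset.single_le_sum (fun _ _ => Nat.zero_le _) (Finset.mem_univ i)
  -- span inclusion 1
  have hspan_le : Submodule.span ℂ (Set.range (fdd lam Λ)) ≤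
      Submodule.span ℂ (Set.range fun p : Σ i : Fin m, Fin (k i) =>
        fun x : ℝ => Complex.exp (lam p * x)) := by
    rw [Submodule.span_le]
    rintro g ⟨p, rfl⟩
    rw [hcomb p]
    apply Submodule.sum_mem
    intro l _
    exact Submodule.smul_mem _ _ (Submodule.subset_span ⟨⟨p.1, l⟩, rfl⟩)
  -- span inclusion 2
  have hrev : ∀ (i : Fin m) (jv : ℕ) (hj : jv < k i),
      (fun x : ℝ => Complex.exp (lam ⟨i, ⟨jv, hj⟩⟩ * x)) ∈
        Submodule.span ℂ (Set.range (fdd lam Λ)) := by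
    intro i jv
    induction jv using Nat.strong_induction_on with
    | _ jv IH =>
      intro hj
      have hIic : Finset.Iic (⟨jv, hj⟩ : Fin (k i)) =
          insert (⟨jv, hj⟩ : Fin (k i)) (Finset.Iio (⟨jv, hj⟩ : Fin (k i))) := by
        ext l
        simp only [Finset.mem_Iic, Finset.mem_insert, Finset.mem_Iio, Fin.le_def, Fin.lt_def,
          Fin.ext_iff]
        omega
      have hsum := hcomb ⟨i, ⟨jv, hj⟩⟩
      rw [hIic, Finset.sum_insert (by simp)] at hsum
      have hc := coefdd_ne (lam := lam) (Λ := Λ) ⟨i, ⟨jv, hj⟩⟩ ⟨jv, hj⟩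
      have hE : (fun x : ℝ => Complex.exp (lam ⟨i, ⟨jv, hj⟩⟩ * x))
          = (coefdd lam Λ ⟨i, ⟨jv, hj⟩⟩ ⟨jv, hj⟩)⁻¹ •
            (fdd lam Λ ⟨i, ⟨jv, hj⟩⟩ - ∑ l ∈ Finset.Iio (⟨jv, hj⟩ : Fin (k i)),
              coefdd lam Λ ⟨i, ⟨jv, hj⟩⟩ l • (fun x : ℝ => Complex.exp (lam ⟨i, l⟩ * x))) := by
        rw [hsum, add_sub_cancel_right, smul_smul, inv_mul_cancel₀ hc, one_smul]
      rw [hE]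
      apply Submodule.smul_mem
      apply Submodule.sub_mem
      · exact Submodule.subset_span ⟨_, rfl⟩
      · apply Submodule.sum_mem
        intro l hl
        apply Submodule.smul_mem
        have hlj : (l : ℕ) < jv := by
          have h5 := Finset.mem_Iio.mp hl
          simpa [Fin.lt_def] using h5
        have h := IH (l : ℕ) hlj l.isLt
        simpa [Fin.eta] using h
  have hspan_ge : Submodule.span ℂ (Set.range fun p : Σ i : Fin m, Fin (k i) =>
      fun x : ℝ => Complex.exp (lam p * x)) ≤
      Submodule.span ℂ (Set.range (fdd lam Λ)) := by
    rw [Submodule.span_le]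
    rintro g ⟨q, rfl⟩
    have h := hrev q.1 (q.2 : ℕ) q.2.isLt
    simpa [Fin.eta, Sigma.eta] using h
  have hspan_eq : Submodule.span ℂ (Set.range (fdd lam Λ)) =
      Submodule.span ℂ (Set.range fun p : Σ i : Fin m, Fin (k i) =>
        fun x : ℝ => Complex.exp (lam p * x)) := le_antisymm hspan_le hspan_ge
  -- linear independence
  have hEli := exp_linearIndependent lam hinj
  have hFli : LinearIndependent ℂ (fdd lam Λ) := by
    rw [linearIndependent_iff_card_eq_finrank_span] at hEli ⊢
    rw [Set.finrank] at hEli ⊢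
    rw [hspan_eq]
    exact hEli
  refine ⟨fdd lam Λ, hFli, hspan_eq, ?_⟩
  -- norm bound
  intro p
  set g : ℝ → ℂ := fun x : ℝ =>
    fdd lam Λ p x - (x : ℂ) ^ (p.2 : ℕ) * Complex.exp (Λ p.1 * x) with hgdef
  have hcont : Continuous g := by
    apply Continuous.sub
    · rw [show fdd lam Λ p = fun x : ℝ => Complex.exp (Λ p.1 * x) *
          ((Nat.factorial (p.2 : ℕ) : ℂ) * ddsum (spts lam Λ p) x) from rfl]
      refine Continuous.mul ?_ (continuous_const.mul ?_)
      · exact Complex.continuous_exp.comp (continuous_const.mul Complex.continuous_ofReal)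
      · show Continuous fun x : ℝ => ∑ z ∈ spts lam Λ p,
            Complex.exp (z * x) * (∏ w ∈ (spts lam Λ p).erase z, (z - w))⁻¹
        apply continuous_finset_sum
        intro z _
        exact (Complex.continuous_exp.comp (continuous_const.mul
          Complex.continuous_ofReal)).mul continuous_const
    · exact (Complex.continuous_ofReal.pow _).mul
        (Complex.continuous_exp.comp (continuous_const.mul Complex.continuous_ofReal))
  have hΛR : ‖Λ p.1‖ ≤ R := by
    rw [hRdef]
    exact Finset.single_le_sum (fun i _ => norm_nonneg (Λ i)) (Finset.mem_univ p.1)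
  have hpoint : ∀ x ∈ Set.Icc (-Real.pi) Real.pi, ‖g x‖ ^ 2 ≤ (K0 * ε₀)^2 := by
    intro x hx
    have hxabs : |x| ≤ Real.pi := abs_le.mpr ⟨hx.1, hx.2⟩
    have h1 := fdd_close hinj n p (by
        have := p.2.isLt
        have := hkin p.1
        omega) ε₀ hε₀pos.le hε₀1
      (fun l => (hclose ⟨p.1, l⟩).le) x hxabs
    have h2 : Real.exp (‖Λ p.1‖ * Real.pi) * (Nat.factorial n) * (ε₀ * Etot)
        ≤ K0 * ε₀ := by
      have hexp : Real.exp (‖Λ p.1‖ * Real.pi) ≤ Real.exp (R * Real.pi) :=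
        Real.exp_le_exp.mpr (mul_le_mul_of_nonneg_right hΛR hpi.le)
      have hC : (0:ℝ) ≤ (Nat.factorial n : ℝ) * (ε₀ * Etot) := by positivity
      calc Real.exp (‖Λ p.1‖ * Real.pi) * (Nat.factorial n) * (ε₀ * Etot)
          = Real.exp (‖Λ p.1‖ * Real.pi)
            * ((Nat.factorial n : ℝ) * (ε₀ * Etot)) := by ring
        _ ≤ Real.exp (R * Real.pi) * ((Nat.factorial n : ℝ) * (ε₀ * Etot)) :=
            mul_le_mul_of_nonneg_right hexp hC
        _ = K0 * ε₀ := by rw [hK0def]; ring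
    have hnorm : ‖g x‖ ≤ K0 * ε₀ := by
      rw [hgdef]
      calc ‖fdd lam Λ p x - (x : ℂ) ^ (p.2 : ℕ) * Complex.exp (Λ p.1 * x)‖
          = ‖fdd lam Λ p x - (x : ℂ) ^ (p.2 : ℕ) * Complex.exp (Λ p.1 * x)‖ := rfl
        _ ≤ _ := h1
        _ ≤ K0 * ε₀ := h2
    exact pow_le_pow_left₀ (norm_nonneg _) hnorm 2
  have hIccMeas : MeasurableSet (Set.Icc (-Real.pi) Real.pi) := measurableSet_Icc
  have hint1 : IntegrableOn (fun x => ‖g x‖ ^ 2) (Set.Icc (-Real.pi) Real.pi) volume :=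
    (hcont.norm.pow 2).integrableOn_Icc
  have hint : ∫ x in Set.Icc (-Real.pi) Real.pi, ‖g x‖ ^ 2
      ≤ (K0 * ε₀)^2 * (2 * Real.pi) := by
    calc ∫ x in Set.Icc (-Real.pi) Real.pi, ‖g x‖ ^ 2
        ≤ ∫ _x in Set.Icc (-Real.pi) Real.pi, (K0 * ε₀)^2 :=
          setIntegral_mono_on hint1 ((integrableOn_const_iff (C := (K0 * ε₀)^2)).mpr (Or.inr (by
            rw [Real.volume_Icc]; exact ENNReal.ofReal_lt_top))) hIccMeas hpoint
      _ = (K0 * ε₀)^2 * (2 * Real.pi) := by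
          rw [setIntegral_const, Real.volume_real_Icc_of_le (by linarith), smul_eq_mul]
          ring
  have hK1ε : ε₀ * K1 ≤ δ := (le_div_iff₀ hK10).mp hε₀δ
  have hstrict : (K0 * ε₀)^2 * (2 * Real.pi) < δ ^ 2 := by
    have h3 : (K0 * ε₀)^2 * (2 * Real.pi) < (ε₀ * K1)^2 := by
      rw [hK1def]
      have hcore : K0^2 * (2 * Real.pi) < (K0+1)^2 * (2*Real.pi+1)^2 := by
        nlinarith [mul_nonneg (mul_nonneg hK00 hK00) hpi.le, sq_nonneg K0, hpi,
          mul_pos hpi hpi, mul_nonneg hK00 hpi.le]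
      have h3' := mul_lt_mul_of_pos_right hcore (mul_pos hε₀pos hε₀pos)
      calc (K0 * ε₀)^2 * (2 * Real.pi) = K0^2 * (2*Real.pi) * (ε₀*ε₀) := by ring
        _ < (K0+1)^2 * (2*Real.pi+1)^2 * (ε₀*ε₀) := h3'
        _ = (ε₀ * ((K0 + 1) * (2 * Real.pi + 1)))^2 := by ring
    have h4 : (ε₀ * K1)^2 ≤ δ^2 := by
      apply pow_le_pow_left₀ (by positivity) hK1ε
    linarith
  rw [L2norm]
  exact (Real.sqrt_lt' hδ).mpr (lt_of_le_of_lt hint hstrict)
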